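/- Define a sequence (c_n)_{n≥1} of complex numbers by c_1 = 1, c_2 = 2, and c_n = 2c_{n-1} + (n-2)c_{n-2} for n ≥ 3. Then c_n = (-i/√2)^{n-1} · H_{n-1}(i√2) for all n ≥ 1, where H_k denotes the physicists' Hermite polynomial (H_0 = 1, H_1(z) = 2z, H_{k+1}(z) = 2z·H_k(z) − 2k·H_{k-1}(z)); equivalently, c_n = (−i)^{n-1} · He_{n-1}(2i), where He_k denotes the probabilists' Hermite polynomial (He_0 = 1, He_1(z) = z, He_{k+1}(z) = z·He_k(z) − k·He_{k-1}(z)). -/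

import Mathlib

open Polynomial

/-- The physicists' Hermite polynomials, as functions on `ℂ`:
`H_0 = 1`, `H_1(z) = 2z`, `H_{k+2}(z) = 2z·H_{k+1}(z) − 2(k+1)·H_k(z)`. -/
noncomputable def physHermite : ℕ → ℂ → ℂ
  | 0, _ => 1
  | 1, z => 2 * z
  | (k + 2), z => 2 * z * physHermite (k + 1) z - 2 * ((k : ℂ) + 1) * physHermite k z

lemma derivative_hermite (n : ℕ) :
    derivative (hermite (n + 1)) = C ((n : ℤ) + 1) * hermite n := by
  induction n with
  | zero => simp [hermite_one, hermite_zero]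
  | succ n ih =>
    rw [hermite_succ (n + 1)]
    rw [derivative_sub, derivative_mul, derivative_X, one_mul, ih]
    rw [derivative_mul, derivative_C, zero_mul, zero_add]
    rw [hermite_succ n]
    simp only [Nat.cast_add, Nat.cast_one, C_add, C_1]
    ring

lemma hermite_three_term (n : ℕ) :
    hermite (n + 2) = X * hermite (n + 1) - C ((n : ℤ) + 1) * hermite n := by
  rw [hermite_succ (n + 1), derivative_hermite]

lemma physHermite_succ_succ (k : ℕ) (z : ℂ) :
    physHermite (k + 2) z
      = 2 * z * physHermite (k + 1) z - 2 * ((k : ℂ) + 1) * physHermite k z := rfl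

/-- `A n = (-i/√2)^n H_n(i√2)` satisfies `A 0 = 1`, `A 1 = 2`,
`A (k+2) = 2 A (k+1) + (k+1) A k`. Same for the probabilists' version. -/
noncomputable def AA (n : ℕ) : ℂ :=
  (-Complex.I / (Real.sqrt 2 : ℂ)) ^ n *
    physHermite n (Complex.I * (Real.sqrt 2 : ℂ))

noncomputable def BB (n : ℕ) : ℂ :=
  (-Complex.I) ^ n * Polynomial.aeval (2 * Complex.I) (Polynomial.hermite n)

lemma sqrt2_ne : ((Real.sqrt 2 : ℝ) : ℂ) ≠ 0 := by
  norm_cast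
  positivity

lemma sqrt2_sq : ((Real.sqrt 2 : ℝ) : ℂ) ^ 2 = 2 := by
  norm_cast
  rw [Real.sq_sqrt] <;> norm_num

lemma AA_zero : AA 0 = 1 := by simp [AA, physHermite]

lemma AA_one : AA 1 = 2 := by
  have h := sqrt2_ne
  simp only [AA, physHermite, pow_one]
  field_simp
  linear_combination (-1 : ℂ) * Complex.I_sq

lemma AA_rec (k : ℕ) : AA (k + 2) = 2 * AA (k + 1) + ((k : ℂ) + 1) * AA k := by
  set r : ℂ := -Complex.I / (Real.sqrt 2 : ℂ) with hr
  set z : ℂ := Complex.I * (Real.sqrt 2 : ℂ) with hz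
  have hrz : r * z = 1 := by
    have h := sqrt2_ne
    rw [hr, hz]
    field_simp
    linear_combination (-1 : ℂ) * Complex.I_sq
  have hr2 : r ^ 2 = -(1/2) := by
    rw [hr, div_pow, sqrt2_sq, show ((-Complex.I):ℂ)^2 = -1 by
      rw [neg_pow]; simp [Complex.I_sq]]
    norm_num
  simp only [AA, physHermite_succ_succ]
  have e1 : r ^ (k + 2) = r * r ^ (k + 1) := by ring
  have e2 : r ^ (k + 2) = r ^ 2 * r ^ k := by ring
  calc r ^ (k + 2) * (2 * z * physHermite (k + 1) z - 2 * ((k : ℂ) + 1) * physHermite k z)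
      = 2 * (r * z) * (r ^ (k + 1) * physHermite (k + 1) z)
        - 2 * ((k : ℂ) + 1) * r ^ 2 * (r ^ k * physHermite k z) := by ring
    _ = 2 * (r ^ (k + 1) * physHermite (k + 1) z) + ((k : ℂ) + 1) * (r ^ k * physHermite k z) := by
        rw [hrz, hr2]; ring

lemma BB_zero : BB 0 = 1 := by simp [BB, hermite_zero]

lemma BB_one : BB 1 = 2 := by
  simp [BB, hermite_one]
  linear_combination (-2 : ℂ) * Complex.I_sq

lemma BB_rec (k : ℕ) : BB (k + 2) = 2 * BB (k + 1) + ((k : ℂ) + 1) * BB k := by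
  set s : ℂ := -Complex.I with hs
  set z : ℂ := 2 * Complex.I with hz
  have hsz : s * z = 2 := by
    rw [hs, hz]
    linear_combination (-2 : ℂ) * Complex.I_sq
  have hs2 : s ^ 2 = -1 := by
    rw [hs, neg_pow]; simp [Complex.I_sq]
  simp only [BB, hermite_three_term, map_sub, map_mul, aeval_X, aeval_C]
  push_cast
  calc s ^ (k + 2) * (z * aeval z (hermite (k + 1)) - ((k : ℂ) + 1) * aeval z (hermite k))
      = (s * z) * (s ^ (k + 1) * aeval z (hermite (k + 1)))
        - ((k : ℂ) + 1) * s ^ 2 * (s ^ k * aeval z (hermite k)) := by ring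
    _ = 2 * (s ^ (k + 1) * aeval z (hermite (k + 1))) + ((k : ℂ) + 1) * (s ^ k * aeval z (hermite k)) := by
        rw [hsz, hs2]; ring

/-- The sequence `c_1 = 1`, `c_2 = 2`,
`c_n = 2c_{n-1} + (n-2)c_{n-2}` satisfies
`c_n = (-i/√2)^{n-1} H_{n-1}(i√2)` (physicists' Hermite polynomials), equivalently
`c_n = (-i)^{n-1} He_{n-1}(2i)` (probabilists' Hermite polynomials,
`Polynomial.hermite` in Mathlib). -/
theorem stmt14 (c : ℕ → ℂ) (h1 : c 1 = 1) (h2 : c 2 = 2)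
    (hrec : ∀ n, 3 ≤ n → c n = 2 * c (n - 1) + ((n : ℂ) - 2) * c (n - 2)) :
    ∀ n, 1 ≤ n →
      c n = (-Complex.I / (Real.sqrt 2 : ℂ)) ^ (n - 1) *
              physHermite (n - 1) (Complex.I * (Real.sqrt 2 : ℂ)) ∧
      c n = (-Complex.I) ^ (n - 1) *
              Polynomial.aeval (2 * Complex.I) (Polynomial.hermite (n - 1)) := by
  have key : ∀ k : ℕ, c (k + 1) = AA k ∧ c (k + 2) = AA (k + 1)
      ∧ c (k + 1) = BB k ∧ c (k + 2) = BB (k + 1) := by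
    intro k
    induction k with
    | zero =>
      refine ⟨?_, ?_, ?_, ?_⟩ <;>
        simp [h1, h2, AA_zero, AA_one, BB_zero, BB_one]
    | succ k ih =>
      obtain ⟨iA1, iA2, iB1, iB2⟩ := ih
      have hc : c (k + 3) = 2 * c (k + 2) + ((k : ℂ) + 1) * c (k + 1) := by
        have := hrec (k + 3) (by omega)
        simpa using this |>.trans (by push_cast; ring_nf)
      refine ⟨iA2, ?_, iB2, ?_⟩
      · rw [show k + 1 + 2 = k + 3 from rfl, hc, AA_rec, iA1, iA2]
      · rw [show k + 1 + 2 = k + 3 from rfl, hc, BB_rec, iB1, iB2]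
  intro n hn
  obtain ⟨k, rfl⟩ : ∃ k, n = k + 1 := ⟨n - 1, by omega⟩
  obtain ⟨hA, _, hB, _⟩ := key k
  simp only [Nat.add_sub_cancel]
  exact ⟨hA, hB⟩
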